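/- Let q(x) = x - a_0 - a_1/(x - b_1) - ... - a_m/(x - b_m) be a real rational function where a_1, ..., a_m are positive reals, a_0 is a nonnegative real, and b_1 < b_2 < ... < b_m are nonnegative reals. Then q has real roots R_1, R_2, ..., R_{m+1} satisfying R_1 < b_1 < R_2 < b_2 < ... < R_m < b_m < R_{m+1}. -/

import Mathlib

open Filter Set Topology

private noncomputable def qq {m : ℕ} (a0 : ℝ) (a b : Fin m → ℝ) (x : ℝ) : ℝ :=
  x - a0 - ∑ j, a j / (x - b j)

section aux
variable {m : ℕ} (a0 : ℝ) (a : Fin m → ℝ) (b : Fin m → ℝ)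

private lemma qq_contAt {x : ℝ} (hx : ∀ j, x ≠ b j) : ContinuousAt (qq a0 a b) x := by
  apply (continuousAt_id.sub continuousAt_const).sub
  exact tendsto_finset_sum _ fun j _ =>
    continuousAt_const.div (continuousAt_id.sub continuousAt_const) (sub_ne_zero.mpr (hx j))

private lemma qq_sum_zero_atTop :
    Tendsto (fun x : ℝ => ∑ j, a j / (x - b j)) atTop (𝓝 0) := by
  have h : Tendsto (fun x : ℝ => ∑ j, a j / (x - b j)) atTop (𝓝 (∑ j : Fin m, a j * 0)) := by
    apply tendsto_finset_sum
    intro j _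
    have hinv : Tendsto (fun x : ℝ => (x - b j)⁻¹) atTop (𝓝 0) :=
      tendsto_inv_atTop_zero.comp (tendsto_atTop_add_const_right _ (-b j) tendsto_id)
    have := (tendsto_const_nhds (x := a j) (f := atTop)).mul hinv
    simpa [div_eq_mul_inv] using this
  simpa using h

private lemma qq_sum_zero_atBot :
    Tendsto (fun x : ℝ => ∑ j, a j / (x - b j)) atBot (𝓝 0) := by
  have h : Tendsto (fun x : ℝ => ∑ j, a j / (x - b j)) atBot (𝓝 (∑ j : Fin m, a j * 0)) := by
    apply tendsto_finset_sum
    intro j _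
    have hdenom : Tendsto (fun x : ℝ => x - b j) atBot atBot :=
      tendsto_atBot_add_const_right _ (-b j) tendsto_id
    have h1 : Tendsto (fun x : ℝ => (-(x - b j))⁻¹) atBot (𝓝 0) :=
      tendsto_inv_atTop_zero.comp (tendsto_neg_atBot_atTop.comp hdenom)
    have h2 : Tendsto (fun x : ℝ => -(-(x - b j))⁻¹) atBot (𝓝 (-0)) := h1.neg
    have heq : (fun x : ℝ => -(-(x - b j))⁻¹) = fun x : ℝ => (x - b j)⁻¹ := by
      ext x; rw [inv_neg, neg_neg]
    have hinv : Tendsto (fun x : ℝ => (x - b j)⁻¹) atBot (𝓝 0) := by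
      rw [heq, neg_zero] at h2; exact h2
    have := (tendsto_const_nhds (x := a j) (f := atBot)).mul hinv
    simpa [div_eq_mul_inv] using this
  simpa using h

private lemma qq_atTop : Tendsto (qq a0 a b) atTop atTop := by
  have h : Tendsto (fun x : ℝ => -a0 - ∑ j, a j / (x - b j)) atTop (𝓝 (-a0 - 0)) :=
    tendsto_const_nhds.sub (qq_sum_zero_atTop a b)
  have := tendsto_id.atTop_add h
  apply this.congr
  intro x; simp only [qq, id]; ring

private lemma qq_atBot : Tendsto (qq a0 a b) atBot atBot := by
  have h : Tendsto (fun x : ℝ => -a0 - ∑ j, a j / (x - b j)) atBot (𝓝 (-a0 - 0)) :=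
    tendsto_const_nhds.sub (qq_sum_zero_atBot a b)
  have := tendsto_id.atBot_add h
  apply this.congr
  intro x; simp only [qq, id]; ring

private lemma qq_pole (ha : ∀ i, 0 < a i) (hb : StrictMono b) (i : Fin m) :
    Tendsto (qq a0 a b) (𝓝[>] (b i)) atBot ∧ Tendsto (qq a0 a b) (𝓝[<] (b i)) atTop := by
  set g : ℝ → ℝ := fun x => x - a0 - ∑ j ∈ Finset.univ.erase i, a j / (x - b j) with hg
  have hq : ∀ x : ℝ, qq a0 a b x = g x - a i / (x - b i) := by
    intro x
    simp only [qq, hg]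
    rw [← Finset.sum_erase_add _ _ (Finset.mem_univ i)]
    ring
  have hgc : ContinuousAt g (b i) := by
    apply (continuousAt_id.sub continuousAt_const).sub
    apply tendsto_finset_sum
    intro j hj
    refine continuousAt_const.div (continuousAt_id.sub continuousAt_const) ?_
    have : j ≠ i := Finset.ne_of_mem_erase hj
    exact sub_ne_zero.mpr fun h => this (hb.injective h.symm)
  have hgt : Tendsto g (𝓝 (b i)) (𝓝 (g (b i))) := hgc.tendsto
  have hinv_r : Tendsto (fun x : ℝ => a i / (x - b i)) (𝓝[>] (b i)) atTop := by
    have h1 : Tendsto (fun x : ℝ => x - b i) (𝓝[>] (b i)) (𝓝[>] (0:ℝ)) := by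
      apply tendsto_nhdsWithin_of_tendsto_nhds_of_eventually_within
      · have h0 : Tendsto (fun x : ℝ => x - b i) (𝓝 (b i)) (𝓝 (b i - b i)) :=
          (continuous_id.sub continuous_const).tendsto (b i)
        rw [sub_self] at h0
        exact h0.mono_left nhdsWithin_le_nhds
      · filter_upwards [self_mem_nhdsWithin] with x hx
        simpa [sub_pos] using hx
    simp only [div_eq_mul_inv]
    exact Tendsto.const_mul_atTop (ha i) (tendsto_inv_nhdsGT_zero.comp h1)
  have hinv_l : Tendsto (fun x : ℝ => a i / (b i - x)) (𝓝[<] (b i)) atTop := by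
    have h1 : Tendsto (fun x : ℝ => b i - x) (𝓝[<] (b i)) (𝓝[>] (0:ℝ)) := by
      apply tendsto_nhdsWithin_of_tendsto_nhds_of_eventually_within
      · have h0 : Tendsto (fun x : ℝ => b i - x) (𝓝 (b i)) (𝓝 (b i - b i)) :=
          (continuous_const.sub continuous_id).tendsto (b i)
        rw [sub_self] at h0
        exact h0.mono_left nhdsWithin_le_nhds
      · filter_upwards [self_mem_nhdsWithin] with x hx
        simpa [sub_pos] using hx
    simp only [div_eq_mul_inv]
    exact Tendsto.const_mul_atTop (ha i) (tendsto_inv_nhdsGT_zero.comp h1)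
  have hkey : ∀ x : ℝ, a i / (b i - x) = -(a i / (x - b i)) := by
    intro x
    rw [← neg_sub x (b i), div_neg]
  constructor
  · have hneg : Tendsto (fun x : ℝ => -(a i / (x - b i))) (𝓝[>] (b i)) atBot :=
      tendsto_neg_atTop_atBot.comp hinv_r
    have := (hgt.mono_left nhdsWithin_le_nhds).add_atBot hneg
    apply this.congr
    intro x
    rw [hq x]; ring
  · have := (hgt.mono_left nhdsWithin_le_nhds).add_atTop hinv_l
    apply this.congr
    intro x
    rw [hq x, hkey x]; ring
end aux

theorem stmt_0 (m : ℕ) (a0 : ℝ) (ha0 : 0 ≤ a0) (a : Fin m → ℝ) (ha : ∀ i, 0 < a i)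
    (b : Fin m → ℝ) (hb0 : ∀ i, 0 ≤ b i) (hb : StrictMono b) :
    ∃ R : Fin (m + 1) → ℝ,
      (∀ i : Fin (m + 1), (∀ j, R i ≠ b j) ∧
        R i - a0 - ∑ j, a j / (R i - b j) = 0) ∧
      (∀ i : Fin m, R i.castSucc < b i ∧ b i < R i.succ) := by
  set q := qq a0 a b with hqdef
  have key : ∀ i : Fin (m + 1), ∃ x : ℝ, (∀ j, x ≠ b j) ∧ q x = 0 ∧
      (∀ j : Fin m, (i : ℕ) ≤ (j : ℕ) → x < b j) ∧
      (∀ j : Fin m, (j : ℕ) < (i : ℕ) → b j < x) := by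
    intro i
    rcases Nat.eq_zero_or_pos m with hm | hm
    · subst hm
      refine ⟨a0, fun j => j.elim0, ?_, fun j => j.elim0, fun j => j.elim0⟩
      simp [hqdef, qq]
    rcases Nat.eq_zero_or_pos (i : ℕ) with hi0 | hi0
    · -- first interval: Iio (b ⟨0⟩)
      set c := b ⟨0, hm⟩ with hc
      have hle : ∀ j : Fin m, c ≤ b j := fun j =>
        hb.monotone (Fin.le_def.mpr (Nat.zero_le _))
      have hcont : ContinuousOn q (Iio c) := fun x hx =>
        (qq_contAt a0 a b (fun j => ne_of_lt (lt_of_lt_of_le hx (hle j)))).continuousWithinAt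
      have hsub : (0:ℝ) ∈ q '' (Iio c) :=
        isPreconnected_Iio.intermediate_value_Iii (l₁ := atBot) (l₂ := 𝓝[<] c)
          (le_principal_iff.mpr (Iio_mem_atBot c)) inf_le_right hcont (qq_atBot a0 a b)
          ((qq_pole a0 a b ha hb ⟨0, hm⟩).2) (mem_univ 0)
      obtain ⟨x, hx, hqx⟩ := hsub
      have hxlt : ∀ j : Fin m, x < b j := fun j => lt_of_lt_of_le hx (hle j)
      exact ⟨x, fun j => ne_of_lt (hxlt j), hqx, fun j _ => hxlt j,
        fun j hj => absurd hj (by omega)⟩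
    rcases eq_or_lt_of_le (Nat.le_of_lt_succ i.isLt) with him | him
    · -- last interval: Ioi (b ⟨m-1⟩)
      have hlt : m - 1 < m := by omega
      set c := b ⟨m - 1, hlt⟩ with hc
      have hge : ∀ j : Fin m, b j ≤ c := fun j =>
        hb.monotone (Fin.le_def.mpr (by have := j.isLt; simp; omega))
      have hcont : ContinuousOn q (Ioi c) := fun x hx =>
        (qq_contAt a0 a b (fun j => ne_of_gt (lt_of_le_of_lt (hge j) hx))).continuousWithinAt
      have hsub : (0:ℝ) ∈ q '' (Ioi c) :=
        isPreconnected_Ioi.intermediate_value_Iii (l₁ := 𝓝[>] c) (l₂ := atTop)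
          inf_le_right (le_principal_iff.mpr (Ioi_mem_atTop c)) hcont
          ((qq_pole a0 a b ha hb ⟨m - 1, hlt⟩).1) (qq_atTop a0 a b) (mem_univ 0)
      obtain ⟨x, hx, hqx⟩ := hsub
      have hxgt : ∀ j : Fin m, b j < x := fun j => lt_of_le_of_lt (hge j) hx
      exact ⟨x, fun j => ne_of_gt (hxgt j), hqx, fun j hj => absurd hj (by omega),
        fun j _ => hxgt j⟩
    · -- middle interval: Ioo (b ⟨i-1⟩) (b ⟨i⟩)
      have hlt1 : (i : ℕ) - 1 < m := by omega
      have hlt2 : (i : ℕ) < m := him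
      set c := b ⟨(i : ℕ) - 1, hlt1⟩ with hc
      set d := b ⟨(i : ℕ), hlt2⟩ with hd
      have hcd : c < d := hb (show (⟨(i : ℕ) - 1, hlt1⟩ : Fin m) < ⟨(i : ℕ), hlt2⟩ from Fin.mk_lt_mk.mpr (by omega))
      have hle1 : ∀ j : Fin m, (j : ℕ) < (i : ℕ) → b j ≤ c := fun j hj =>
        hb.monotone (Fin.le_def.mpr (by simp; omega))
      have hle2 : ∀ j : Fin m, (i : ℕ) ≤ (j : ℕ) → d ≤ b j := fun j hj =>
        hb.monotone (Fin.le_def.mpr (by simp; omega))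
      have hmem : ∀ x ∈ Ioo c d, ∀ j : Fin m, x ≠ b j := by
        intro x hx j
        rcases lt_or_ge (j : ℕ) (i : ℕ) with h | h
        · exact ne_of_gt (lt_of_le_of_lt (hle1 j h) hx.1)
        · exact ne_of_lt (lt_of_lt_of_le hx.2 (hle2 j h))
      have hcont : ContinuousOn q (Ioo c d) := fun x hx =>
        (qq_contAt a0 a b (hmem x hx)).continuousWithinAt
      haveI h1 : (𝓝[Ioo c d] c).NeBot := left_nhdsWithin_Ioo_neBot hcd
      haveI h2 : (𝓝[Ioo c d] d).NeBot := right_nhdsWithin_Ioo_neBot hcd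
      have ht1 : Tendsto q (𝓝[Ioo c d] c) atBot :=
        ((qq_pole a0 a b ha hb ⟨(i:ℕ)-1, hlt1⟩).1).mono_left (nhdsWithin_mono _ Ioo_subset_Ioi_self)
      have ht2 : Tendsto q (𝓝[Ioo c d] d) atTop :=
        ((qq_pole a0 a b ha hb ⟨(i:ℕ), hlt2⟩).2).mono_left (nhdsWithin_mono _ Ioo_subset_Iio_self)
      have hsub : (0:ℝ) ∈ q '' (Ioo c d) :=
        isPreconnected_Ioo.intermediate_value_Iii (l₁ := 𝓝[Ioo c d] c) (l₂ := 𝓝[Ioo c d] d)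
          inf_le_right inf_le_right hcont ht1 ht2 (mem_univ 0)
      obtain ⟨x, hx, hqx⟩ := hsub
      exact ⟨x, hmem x hx, hqx,
        fun j hj => lt_of_lt_of_le hx.2 (hle2 j hj),
        fun j hj => lt_of_le_of_lt (hle1 j hj) hx.1⟩
  choose R hR1 hR2 hR3 hR4 using key
  refine ⟨R, fun i => ⟨hR1 i, hR2 i⟩, fun i => ?_⟩
  exact ⟨hR3 i.castSucc i (by simp), hR4 i.succ i (by simp)⟩
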